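/- For every n ≥ 1 and every p : Fin n → ℝ², every point of the segment joining the first and last vertices is within the maximal vertex-to-segment distance of the polygonal curve: for all q ∈ segment ℝ (p 0) (p (n−1)), infDist q (C(p)) ≤ max_{i : Fin n} infDist (p i) (segment ℝ (p 0) (p (n−1))). -/

import Mathlib

open Metric

/-- The polygonal curve on vertices `p 0, …, p (n-1)`: the union of the segments
between consecutive vertices. -/
noncomputable def polyCurve {n : ℕ} (p : Fin n → EuclideanSpace ℝ (Fin 2)) :
    Set (EuclideanSpace ℝ (Fin 2)) :=
  ⋃ i : Fin (n - 1),
    segment ℝ (p ⟨i.1, by have := i.isLt; omega⟩) (p ⟨i.1 + 1, by have := i.isLt; omega⟩)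

/-- Discrete intermediate value: if `t` lies between `f 0` and `f N`, it lies between
some consecutive pair of values. -/
private lemma ivt_discrete (f : ℕ → ℝ) (t : ℝ) :
    ∀ N, 1 ≤ N → f 0 ≤ t → t ≤ f N →
      ∃ j < N, min (f j) (f (j + 1)) ≤ t ∧ t ≤ max (f j) (f (j + 1)) := by
  intro N
  induction N with
  | zero => omega
  | succ N ih =>
    intro _ h0 hN
    by_cases hc : 1 ≤ N
    · by_cases ht : t ≤ f N
      · obtain ⟨j, hj, h⟩ := ih hc h0 ht
        exact ⟨j, by omega, h⟩
      · exact ⟨N, by omega, le_trans (min_le_left _ _) (le_of_not_ge ht),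
          le_trans hN (le_max_right _ _)⟩
    · have hN0 : N = 0 := by omega
      subst hN0
      exact ⟨0, by omega, le_trans (min_le_left _ _) h0, le_trans hN (le_max_right _ _)⟩

private lemma aux_poly {n : ℕ} (p : Fin n → EuclideanSpace ℝ (Fin 2))
    (q : EuclideanSpace ℝ (Fin 2)) (h0n : 0 < n) (hNn : n - 1 < n)
    (hq : q ∈ segment ℝ (p ⟨0, h0n⟩) (p ⟨n - 1, hNn⟩))
    (M : ℝ)
    (hM : ∀ i : Fin n, Metric.infDist (p i) (segment ℝ (p ⟨0, h0n⟩) (p ⟨n - 1, hNn⟩)) ≤ M) :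
    Metric.infDist q (polyCurve p) ≤ M := by
  set p0 := p ⟨0, h0n⟩ with hp0
  set pN := p ⟨n - 1, hNn⟩ with hpN
  have hM0 : 0 ≤ M := le_trans Metric.infDist_nonneg (hM ⟨0, h0n⟩)
  rcases eq_or_lt_of_le (show 1 ≤ n from h0n) with h1 | h2
  · -- n = 1 : empty curve
    haveI he : IsEmpty (Fin (n - 1)) := by
      rw [show n - 1 = 0 from by omega]
      exact Fin.isEmpty'
    rw [polyCurve, Set.iUnion_of_empty, Metric.infDist_empty]
    exact hM0
  · -- 2 ≤ n
    have hn2 : 2 ≤ n := h2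
    have hSc : IsCompact (segment ℝ p0 pN) := by
      rw [segment_eq_image]
      exact isCompact_Icc.image (by fun_prop)
    have hSne : (segment ℝ p0 pN).Nonempty := ⟨p0, left_mem_segment _ _ _⟩
    -- projection parameters
    have key : ∀ i : Fin n, ∃ t : ℝ, 0 ≤ t ∧ t ≤ 1 ∧
        dist (p i) ((1 - t) • p0 + t • pN) ≤ M ∧ (i.1 = 0 → t = 0) ∧ (i.1 = n - 1 → t = 1) := by
      intro i
      by_cases hi0 : i.1 = 0
      · refine ⟨0, le_refl _, zero_le_one, ?_, fun _ => rfl, fun h => absurd (hi0 ▸ h) (by omega)⟩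
        have h1 : ((1 : ℝ) - 0) • p0 + (0 : ℝ) • pN = p0 := by
          simp
        have h2 : p i = p0 := by
          rw [hp0]; exact congrArg p <| Fin.ext (show i.1 = (⟨0, h0n⟩ : Fin n).1 from hi0)
        rw [h1, h2, dist_self]
        exact hM0
      · by_cases hiN : i.1 = n - 1
        · refine ⟨1, zero_le_one, le_refl _, ?_, fun h => absurd h hi0, fun _ => rfl⟩
          have h1 : ((1 : ℝ) - 1) • p0 + (1 : ℝ) • pN = pN := by
            simp
          have h2 : p i = pN := by
            rw [hpN]; exact congrArg p <| Fin.ext (show i.1 = (⟨n - 1, hNn⟩ : Fin n).1 from hiN)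
          rw [h1, h2, dist_self]
          exact hM0
        · obtain ⟨y, hyS, hyd⟩ := hSc.isClosed.exists_infDist_eq_dist hSne (p i)
          rw [segment_eq_image] at hyS
          obtain ⟨t, ⟨ht0, ht1⟩, hty⟩ := hyS
          refine ⟨t, ht0, ht1, ?_, fun h => absurd h hi0, fun h => absurd h hiN⟩
          rw [show ((1 - t) • p0 + t • pN) = y from hty, ← hyd]
          exact hM i
    choose T hT0 hT1 hTd hTz hTo using key
    -- the parameter of q
    rw [segment_eq_image] at hq
    obtain ⟨t, ⟨ht0, ht1⟩, hqt⟩ := hq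
    -- discrete IVT
    set f : ℕ → ℝ := fun j => if h : j < n then T ⟨j, h⟩ else 1 with hf
    have hf0 : f 0 = 0 := by
      simp only [hf, dif_pos h0n]
      exact hTz ⟨0, h0n⟩ rfl
    have hfN : f (n - 1) = 1 := by
      simp only [hf, dif_pos hNn]
      exact hTo ⟨n - 1, hNn⟩ rfl
    obtain ⟨j, hjN, hmin, hmax⟩ := ivt_discrete f t (n - 1) (by omega)
      (hf0 ▸ ht0) (hfN ▸ ht1)
    have hjn : j < n := by omega
    have hj1n : j + 1 < n := by omega
    set a := T ⟨j, hjn⟩ with ha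
    set b := T ⟨j + 1, hj1n⟩ with hb
    have hfj : f j = a := by simp only [hf, dif_pos hjn]; rfl
    have hfj1 : f (j + 1) = b := by simp only [hf, dif_pos hj1n]; rfl
    rw [hfj, hfj1] at hmin hmax
    -- interpolation parameter
    have hexists : ∃ s : ℝ, 0 ≤ s ∧ s ≤ 1 ∧ (1 - s) * a + s * b = t := by
      by_cases hab : a = b
      · refine ⟨0, le_refl _, zero_le_one, ?_⟩
        have : t = a := by
          rw [← hab, min_self] at hmin
          rw [← hab, max_self] at hmax
          linarith
        rw [this]; ring
      · refine ⟨(t - a) / (b - a), ?_, ?_, ?_⟩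
        · rcases lt_or_gt_of_ne hab with h | h
          · have h1 : min a b = a := min_eq_left h.le
            rw [h1] at hmin
            exact div_nonneg (by linarith) (by linarith)
          · have h1 : max a b = a := max_eq_left h.le
            rw [h1] at hmax
            rw [show t - a = -(a - t) by ring, show b - a = -(a - b) by ring, neg_div_neg_eq]
            exact div_nonneg (by linarith) (by linarith)
        · rcases lt_or_gt_of_ne hab with h | h
          · have h1 : max a b = b := max_eq_right h.le
            rw [h1] at hmax
            exact div_le_one_of_le₀ (by linarith) (by linarith)
          · have h1 : min a b = b := min_eq_right h.le
            rw [h1] at hmin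
            rw [show t - a = -(a - t) by ring, show b - a = -(a - b) by ring, neg_div_neg_eq]
            exact div_le_one_of_le₀ (by linarith) (by linarith)
        · have hba : b - a ≠ 0 := sub_ne_zero.mpr (Ne.symm hab)
          field_simp
          ring
    obtain ⟨s, hs0, hs1, hst⟩ := hexists
    set ra := (1 - a) • p0 + a • pN with hra
    set rb := (1 - b) • p0 + b • pN with hrb
    set c := (1 - s) • p ⟨j, hjn⟩ + s • p ⟨j + 1, hj1n⟩ with hc
    have hcmem : c ∈ polyCurve p := by
      rw [polyCurve]
      refine Set.mem_iUnion.mpr ⟨⟨j, by omega⟩, ?_⟩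
      exact ⟨1 - s, s, by linarith, hs0, by ring, rfl⟩
    have hqeq : q = (1 - s) • ra + s • rb := by
      rw [← hqt, hra, hrb, ← hst]
      module
    have hdqc : dist q c ≤ (1 - s) * dist (p ⟨j, hjn⟩) ra + s * dist (p ⟨j + 1, hj1n⟩) rb := by
      rw [dist_eq_norm, hqeq, hc]
      have heq : (1 - s) • ra + s • rb - ((1 - s) • p ⟨j, hjn⟩ + s • p ⟨j + 1, hj1n⟩)
          = (1 - s) • (ra - p ⟨j, hjn⟩) + s • (rb - p ⟨j + 1, hj1n⟩) := by
        module
      rw [heq]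
      calc ‖(1 - s) • (ra - p ⟨j, hjn⟩) + s • (rb - p ⟨j + 1, hj1n⟩)‖
          ≤ ‖(1 - s) • (ra - p ⟨j, hjn⟩)‖ + ‖s • (rb - p ⟨j + 1, hj1n⟩)‖ := norm_add_le _ _
        _ = (1 - s) * ‖ra - p ⟨j, hjn⟩‖ + s * ‖rb - p ⟨j + 1, hj1n⟩‖ := by
            rw [norm_smul, norm_smul, Real.norm_of_nonneg (by linarith : (0:ℝ) ≤ 1 - s),
              Real.norm_of_nonneg hs0]
        _ = (1 - s) * dist (p ⟨j, hjn⟩) ra + s * dist (p ⟨j + 1, hj1n⟩) rb := by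
            rw [dist_eq_norm, dist_eq_norm, ← norm_neg (ra - _), ← norm_neg (rb - _)]
            congr 2 <;> abel_nf
    have hda : dist (p ⟨j, hjn⟩) ra ≤ M := hTd ⟨j, hjn⟩
    have hdb : dist (p ⟨j + 1, hj1n⟩) rb ≤ M := hTd ⟨j + 1, hj1n⟩
    calc Metric.infDist q (polyCurve p) ≤ dist q c := Metric.infDist_le_dist_of_mem hcmem
      _ ≤ (1 - s) * dist (p ⟨j, hjn⟩) ra + s * dist (p ⟨j + 1, hj1n⟩) rb := hdqc
      _ ≤ (1 - s) * M + s * M := by nlinarith [hda, hdb, dist_nonneg (x := p ⟨j, hjn⟩) (y := ra), dist_nonneg (x := p ⟨j + 1, hj1n⟩) (y := rb)]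
      _ = M := by ring

theorem infDist_segment_point_le_max_vertex_dist
    (n : ℕ) (hn : 1 ≤ n) (p : Fin n → EuclideanSpace ℝ (Fin 2))
    (q : EuclideanSpace ℝ (Fin 2))
    (hq : q ∈ segment ℝ (p ⟨0, by omega⟩) (p ⟨n - 1, by omega⟩)) :
    Metric.infDist q (polyCurve p) ≤
      Finset.univ.sup' (Finset.univ_nonempty_iff.mpr ⟨⟨0, by omega⟩⟩)
        (fun i : Fin n =>
          Metric.infDist (p i) (segment ℝ (p ⟨0, by omega⟩) (p ⟨n - 1, by omega⟩))) := by
  refine aux_poly p q (by omega) (by omega) hq _ ?_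
  intro i
  exact Finset.le_sup'
    (fun i : Fin n => Metric.infDist (p i) (segment ℝ (p ⟨0, by omega⟩) (p ⟨n - 1, by omega⟩)))
    (Finset.mem_univ i)
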